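/- Numerical stability of the error propagation (Proposition, corrected hypotheses): let n be a positive integer and let a, B be real numbers with 0 ≤ a < 1 and B ≥ 0. For each i ∈ ℕ let Â_i be a real n × n matrix with operator norm ‖Â_i‖ ≤ a and b_i ∈ ℝⁿ a vector with ‖b_i‖ ≤ B, and let A_i be the (1 + n) × (1 + n) block matrix [[1, 0], [b_i, Â_i]]. Then there exists a constant C ∈ ℝ (depending only on n, a, B) such that for every k ∈ ℕ and every ε₀ ∈ ℝ^{1+n}, the propagated error ε_k = A_{k−1} ⋯ A_1 A_0 ε₀ satisfies ‖ε_k‖ ≤ C·‖ε₀‖. In particular, for any two trajectories x_k, y_k of a discrete system whose stepwise error satisfies x_{k+1} − y_{k+1} = A_k (x_k − y_k), the difference ‖x_k − y_k‖ remains bounded as k → ∞ by C·‖x₀ − y₀‖. -/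

import Mathlib

open Matrix

/-- `revProd M k = M (k-1) * ⋯ * M 1 * M 0`, the product of the first `k` terms of
the sequence `M` with the highest index on the left (empty product is `1`). -/
def revProd {α : Type*} [Monoid α] (M : ℕ → α) : ℕ → α
  | 0 => 1
  | k + 1 => M k * revProd M k

/-- The "tail" part (last `n` coordinates) of a vector in `ℝ^{1+n}`. -/
noncomputable def tl {n : ℕ} (v : EuclideanSpace ℝ (Fin 1 ⊕ Fin n)) : EuclideanSpace ℝ (Fin n) :=
  (WithLp.equiv 2 (Fin n → ℝ)).symm (fun j => v (Sum.inr j))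

lemma tl_apply {n : ℕ} (v : EuclideanSpace ℝ (Fin 1 ⊕ Fin n)) (j : Fin n) :
    tl v j = v (Sum.inr j) := rfl

lemma norm_sq_split {n : ℕ} (v : EuclideanSpace ℝ (Fin 1 ⊕ Fin n)) :
    ‖v‖ ^ 2 = (v (Sum.inl 0)) ^ 2 + ‖tl v‖ ^ 2 := by
  rw [EuclideanSpace.norm_eq, EuclideanSpace.norm_eq,
    Real.sq_sqrt (by positivity), Real.sq_sqrt (by positivity)]
  simp [Fintype.sum_sum_type, tl_apply, sq_abs]

lemma abs_head_le {n : ℕ} (v : EuclideanSpace ℝ (Fin 1 ⊕ Fin n)) :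
    |v (Sum.inl 0)| ≤ ‖v‖ := by
  nlinarith [norm_sq_split v, norm_nonneg v, abs_nonneg (v (Sum.inl 0)),
    sq_abs (v (Sum.inl 0)), sq_nonneg ‖tl v‖]

lemma norm_tl_le {n : ℕ} (v : EuclideanSpace ℝ (Fin 1 ⊕ Fin n)) :
    ‖tl v‖ ≤ ‖v‖ := by
  nlinarith [norm_sq_split v, norm_nonneg v, norm_nonneg (tl v),
    sq_nonneg (v (Sum.inl 0))]

lemma step_head {n : ℕ} (Ahat : Matrix (Fin n) (Fin n) ℝ) (b : EuclideanSpace ℝ (Fin n))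
    (v : EuclideanSpace ℝ (Fin 1 ⊕ Fin n)) :
    (Matrix.toEuclideanCLM (𝕜 := ℝ) (Matrix.fromBlocks 1 0
      (Matrix.of fun r (_ : Fin 1) => WithLp.equiv 2 (Fin n → ℝ) b r) Ahat) v) (Sum.inl 0)
      = v (Sum.inl 0) := by
  have h := Matrix.ofLp_toEuclideanCLM (𝕜 := ℝ)
    (Matrix.fromBlocks 1 0
      (Matrix.of fun r (_ : Fin 1) => WithLp.equiv 2 (Fin n → ℝ) b r) Ahat) v
  have h2 := congrFun h (Sum.inl 0)
  simp only [Matrix.toLin'_apply, WithLp.equiv_apply] at h2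
  simpa [Matrix.mulVec, dotProduct, Fintype.sum_sum_type] using h2

lemma step_tail {n : ℕ} (Ahat : Matrix (Fin n) (Fin n) ℝ) (b : EuclideanSpace ℝ (Fin n))
    (v : EuclideanSpace ℝ (Fin 1 ⊕ Fin n)) :
    tl (Matrix.toEuclideanCLM (𝕜 := ℝ) (Matrix.fromBlocks 1 0
      (Matrix.of fun r (_ : Fin 1) => WithLp.equiv 2 (Fin n → ℝ) b r) Ahat) v)
      = v (Sum.inl 0) • b + Matrix.toEuclideanCLM (𝕜 := ℝ) Ahat (tl v) := by
  ext j
  have h := Matrix.ofLp_toEuclideanCLM (𝕜 := ℝ)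
    (Matrix.fromBlocks 1 0
      (Matrix.of fun r (_ : Fin 1) => WithLp.equiv 2 (Fin n → ℝ) b r) Ahat) v
  have h2 := congrFun h (Sum.inr j)
  have h3 := congrFun (Matrix.ofLp_toEuclideanCLM (𝕜 := ℝ) Ahat (tl v)) j
  simp only [Matrix.toLin'_apply, WithLp.equiv_apply] at h2 h3 ⊢
  simp only [Matrix.mulVec, dotProduct, Fintype.sum_sum_type] at h2 h3
  simp only [tl_apply]
  rw [h2]
  simp [PiLp.add_apply, PiLp.smul_apply, h3, tl_apply, Matrix.fromBlocks_apply₂₁,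
    Matrix.fromBlocks_apply₂₂, mul_comm]

/-- Numerical stability of the error propagation: if every `Â i` has Euclidean
operator norm at most `a < 1` and every `b i` has norm at most `B`, and
`A i = [[1, 0], [b i, Â i]]`, then there is a constant `C` such that every
propagated error `ε_k = A (k−1) ⋯ A 0 ε₀` satisfies `‖ε_k‖ ≤ C ‖ε₀‖`; in
particular any two trajectories with stepwise error dynamics
`x (k+1) − y (k+1) = A k (x k − y k)` stay within `C ‖x 0 − y 0‖` of each
other forever. -/
theorem error_propagation_stable (n : ℕ) (hn : 0 < n) (a B : ℝ)
    (ha0 : 0 ≤ a) (ha1 : a < 1) (hB : 0 ≤ B)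
    (Ahat : ℕ → Matrix (Fin n) (Fin n) ℝ)
    (b : ℕ → EuclideanSpace ℝ (Fin n))
    (hAhat : ∀ i, ‖Matrix.toEuclideanCLM (𝕜 := ℝ) (Ahat i)‖ ≤ a)
    (hb : ∀ i, ‖b i‖ ≤ B)
    (A : ℕ → Matrix (Fin 1 ⊕ Fin n) (Fin 1 ⊕ Fin n) ℝ)
    (hA : ∀ i, A i = Matrix.fromBlocks 1 0
        (Matrix.of fun r (_ : Fin 1) => WithLp.equiv 2 (Fin n → ℝ) (b i) r)
        (Ahat i)) :
    ∃ C : ℝ,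
      (∀ (k : ℕ) (ε₀ : EuclideanSpace ℝ (Fin 1 ⊕ Fin n)),
        ‖Matrix.toEuclideanCLM (𝕜 := ℝ) (revProd A k) ε₀‖ ≤ C * ‖ε₀‖) ∧
      ∀ x y : ℕ → EuclideanSpace ℝ (Fin 1 ⊕ Fin n),
        (∀ k, x (k + 1) - y (k + 1) =
            Matrix.toEuclideanCLM (𝕜 := ℝ) (A k) (x k - y k)) →
        ∀ k, ‖x k - y k‖ ≤ C * ‖x 0 - y 0‖ := by
  have h1a : (0:ℝ) < 1 - a := by linarith
  have hBa : 0 ≤ B / (1 - a) := div_nonneg hB h1a.le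
  have key : ∀ (k : ℕ) (ε₀ : EuclideanSpace ℝ (Fin 1 ⊕ Fin n)),
      ‖Matrix.toEuclideanCLM (𝕜 := ℝ) (revProd A k) ε₀‖ ≤ (2 + B / (1 - a)) * ‖ε₀‖ := by
    intro k ε₀
    have inv : ∀ k, (Matrix.toEuclideanCLM (𝕜 := ℝ) (revProd A k) ε₀) (Sum.inl 0) = ε₀ (Sum.inl 0)
        ∧ ‖tl (Matrix.toEuclideanCLM (𝕜 := ℝ) (revProd A k) ε₀)‖
          ≤ ‖tl ε₀‖ + B / (1 - a) * |ε₀ (Sum.inl 0)| := by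
      intro k
      induction k with
      | zero =>
        have h1 : Matrix.toEuclideanCLM (𝕜 := ℝ) (revProd A 0) ε₀ = ε₀ := by
          show Matrix.toEuclideanCLM (𝕜 := ℝ) 1 ε₀ = ε₀
          rw [_root_.map_one, ContinuousLinearMap.one_apply]
        rw [h1]
        refine ⟨rfl, ?_⟩
        have : 0 ≤ B / (1 - a) * |ε₀ (Sum.inl 0)| := by positivity
        linarith
      | succ k ih =>
        have hrw : Matrix.toEuclideanCLM (𝕜 := ℝ) (revProd A (k+1)) ε₀
            = Matrix.toEuclideanCLM (𝕜 := ℝ) (A k)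
              (Matrix.toEuclideanCLM (𝕜 := ℝ) (revProd A k) ε₀) := by
          rw [show revProd A (k+1) = A k * revProd A k from rfl, _root_.map_mul,
            ContinuousLinearMap.mul_apply]
        set w := Matrix.toEuclideanCLM (𝕜 := ℝ) (revProd A k) ε₀ with hw
        rw [hrw, hA k]
        refine ⟨?_, ?_⟩
        · rw [step_head]; exact ih.1
        · rw [step_tail, ih.1]
          have hbd : ‖ε₀ (Sum.inl 0) • b k + Matrix.toEuclideanCLM (𝕜 := ℝ) (Ahat k) (tl w)‖
              ≤ |ε₀ (Sum.inl 0)| * B + a * ‖tl w‖ := by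
            refine (norm_add_le _ _).trans (add_le_add ?_ ?_)
            · rw [norm_smul, Real.norm_eq_abs]
              exact mul_le_mul_of_nonneg_left (hb k) (abs_nonneg _)
            · exact ((Matrix.toEuclideanCLM (𝕜 := ℝ) (Ahat k)).le_opNorm _).trans
                (mul_le_mul_of_nonneg_right (hAhat k) (norm_nonneg _))
          have e : B + a * (B / (1 - a)) = B / (1 - a) := by field_simp; ring
          have htw : a * ‖tl w‖ ≤ a * (‖tl ε₀‖ + B / (1 - a) * |ε₀ (Sum.inl 0)|) := by
            gcongr; exact ih.2
          have ha' : a * ‖tl ε₀‖ ≤ ‖tl ε₀‖ := by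
            nlinarith [norm_nonneg (tl ε₀)]
          refine hbd.trans ?_
          nlinarith [abs_nonneg (ε₀ (Sum.inl 0))]
    have h1 := (inv k).1
    have h2 := (inv k).2
    set w := Matrix.toEuclideanCLM (𝕜 := ℝ) (revProd A k) ε₀ with hw
    have hsplit : ‖w‖ ≤ |w (Sum.inl 0)| + ‖tl w‖ := by
      nlinarith [norm_sq_split w, norm_nonneg w, abs_nonneg (w (Sum.inl 0)),
        norm_nonneg (tl w), sq_abs (w (Sum.inl 0))]
    have hh : |ε₀ (Sum.inl 0)| ≤ ‖ε₀‖ := abs_head_le ε₀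
    have ht : ‖tl ε₀‖ ≤ ‖ε₀‖ := norm_tl_le ε₀
    rw [h1] at hsplit
    nlinarith [norm_nonneg ε₀]
  refine ⟨2 + B / (1 - a), key, ?_⟩
  intro x y hxy k
  have hx : ∀ k, x k - y k = Matrix.toEuclideanCLM (𝕜 := ℝ) (revProd A k) (x 0 - y 0) := by
    intro k
    induction k with
    | zero =>
      show x 0 - y 0 = Matrix.toEuclideanCLM (𝕜 := ℝ) 1 (x 0 - y 0)
      rw [_root_.map_one, ContinuousLinearMap.one_apply]
    | succ k ih =>
      rw [hxy k, ih, show revProd A (k+1) = A k * revProd A k from rfl, _root_.map_mul,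
        ContinuousLinearMap.mul_apply]
  rw [hx k]
  exact key k _
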